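/- Let Q ∈ SO(3), and let α, β, α′, β′ ∈ ℝ satisfy Z(α′)·Y(β′)·n = Q·Z(α)·Y(β)·n. Then there exists θ ∈ ℝ such that for all h ∈ ℝ: Z(α′)·Y(β′)·Z(2πh) = Q·Z(α)·Y(β)·Z(2πh)·Z(θ). (Equivalently, with T(s(α,β), h) = Z(α)Y(β)Z(2πh), one has T(Qx) = Q·T(x)·Z(θ) for some θ independent of h.) -/

import Mathlib

open Matrix


/-- The 3×3 rotation matrix about the z-axis by angle `θ`. -/
noncomputable def Zr (θ : ℝ) : Matrix (Fin 3) (Fin 3) ℝ :=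
  !![Real.cos θ, -Real.sin θ, 0; Real.sin θ, Real.cos θ, 0; 0, 0, 1]

/-- The 3×3 rotation matrix about the y-axis by angle `β`. -/
noncomputable def Yr (β : ℝ) : Matrix (Fin 3) (Fin 3) ℝ :=
  !![Real.cos β, 0, Real.sin β; 0, 1, 0; -Real.sin β, 0, Real.cos β]

/-- The North Pole `n = (0,0,1)ᵀ`. -/
def npole : Fin 3 → ℝ := ![0, 0, 1]

/-- The Euclidean norm of a vector in `ℝ³`. -/
noncomputable def enorm3 (v : Fin 3 → ℝ) : ℝ :=
  Real.sqrt (v 0 ^ 2 + v 1 ^ 2 + v 2 ^ 2)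

lemma Zr_transpose (θ : ℝ) :
    (Zr θ)ᵀ = !![Real.cos θ, Real.sin θ, 0; -Real.sin θ, Real.cos θ, 0; 0, 0, 1] := by
  ext i j
  fin_cases i <;> fin_cases j <;> simp [Zr, Matrix.transpose_apply]

lemma Yr_transpose (β : ℝ) :
    (Yr β)ᵀ = !![Real.cos β, 0, -Real.sin β; 0, 1, 0; Real.sin β, 0, Real.cos β] := by
  ext i j
  fin_cases i <;> fin_cases j <;> simp [Yr, Matrix.transpose_apply]

lemma Zr_transpose_mul (θ : ℝ) : (Zr θ)ᵀ * Zr θ = 1 := by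
  rw [Zr_transpose]
  ext i j
  fin_cases i <;> fin_cases j <;>
    simp [Zr, Matrix.mul_apply, Fin.sum_univ_three, Matrix.one_apply] <;>
    nlinarith [Real.sin_sq_add_cos_sq θ]

lemma Yr_transpose_mul (β : ℝ) : (Yr β)ᵀ * Yr β = 1 := by
  rw [Yr_transpose]
  ext i j
  fin_cases i <;> fin_cases j <;>
    simp [Yr, Matrix.mul_apply, Fin.sum_univ_three, Matrix.one_apply] <;>
    nlinarith [Real.sin_sq_add_cos_sq β]

lemma Zr_det (θ : ℝ) : (Zr θ).det = 1 := by
  simp [Zr, Matrix.det_fin_three]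
  nlinarith [Real.sin_sq_add_cos_sq θ]

lemma Yr_det (β : ℝ) : (Yr β).det = 1 := by
  simp [Yr, Matrix.det_fin_three]
  nlinarith [Real.sin_sq_add_cos_sq β]

lemma Zr_comm (a b : ℝ) : Zr a * Zr b = Zr b * Zr a := by
  ext i j
  fin_cases i <;> fin_cases j <;>
    simp [Zr, Matrix.mul_apply, Fin.sum_univ_three] <;> ring

lemma fixes_npole (M : Matrix (Fin 3) (Fin 3) ℝ)
    (hM : Mᵀ * M = 1) (hdet : M.det = 1)
    (hn : M.mulVec npole = npole) : ∃ θ, M = Zr θ := by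
  have e02 : M 0 2 = 0 := by
    have := congrFun hn 0
    simpa [Matrix.mulVec, dotProduct, Fin.sum_univ_three, npole] using this
  have e12 : M 1 2 = 0 := by
    have := congrFun hn 1
    simpa [Matrix.mulVec, dotProduct, Fin.sum_univ_three, npole] using this
  have e22 : M 2 2 = 1 := by
    have := congrFun hn 2
    simpa [Matrix.mulVec, dotProduct, Fin.sum_univ_three, npole] using this
  have hM' : M * Mᵀ = 1 := mul_eq_one_comm.mp hM
  have h22 : M 2 0 ^ 2 + M 2 1 ^ 2 = 0 := by
    have := congrFun (congrFun hM' 2) 2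
    simp [Matrix.mul_apply, Fin.sum_univ_three, Matrix.one_apply,
      Matrix.transpose_apply, e22] at this
    nlinarith [this]
  have e20 : M 2 0 = 0 := by nlinarith [sq_nonneg (M 2 0), sq_nonneg (M 2 1)]
  have e21 : M 2 1 = 0 := by nlinarith [sq_nonneg (M 2 0), sq_nonneg (M 2 1)]
  have c00 : M 0 0 ^ 2 + M 1 0 ^ 2 = 1 := by
    have := congrFun (congrFun hM 0) 0
    simp [Matrix.mul_apply, Fin.sum_univ_three, Matrix.one_apply,
      Matrix.transpose_apply, e20] at this
    nlinarith [this]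
  have c01 : M 0 0 * M 0 1 + M 1 0 * M 1 1 = 0 := by
    have := congrFun (congrFun hM 0) 1
    simp [Matrix.mul_apply, Fin.sum_univ_three, Matrix.one_apply,
      Matrix.transpose_apply, e20, e21] at this
    nlinarith [this]
  have hdet' : M 0 0 * M 1 1 - M 0 1 * M 1 0 = 1 := by
    have h2 := hdet
    rw [Matrix.det_fin_three, e02, e12, e20, e21, e22] at h2
    nlinarith [h2]
  set a := M 0 0 with ha
  set c := M 1 0 with hc
  obtain ⟨θ, hcos, hsin⟩ : ∃ θ, Real.cos θ = a ∧ Real.sin θ = c := by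
    have hz : (⟨a, c⟩ : ℂ) ≠ 0 := by
      intro hz
      have h1 : a = 0 := congrArg Complex.re hz
      have h2 : c = 0 := congrArg Complex.im hz
      rw [h1, h2] at c00; norm_num at c00
    have habs : ‖(⟨a, c⟩ : ℂ)‖ = 1 := by
      rw [Complex.norm_def, Complex.normSq_mk,
        show a * a + c * c = 1 by nlinarith [c00]]
      exact Real.sqrt_one
    refine ⟨Complex.arg ⟨a, c⟩, ?_, ?_⟩
    · rw [Complex.cos_arg hz, habs]; simp
    · rw [Complex.sin_arg, habs]; simp
  have e01 : M 0 1 = -c := by linear_combination a * c01 - c * hdet' - M 0 1 * c00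
  have e11 : M 1 1 = a := by linear_combination c * c01 + a * hdet' - M 1 1 * c00
  refine ⟨θ, ?_⟩
  ext i j
  fin_cases i <;> fin_cases j <;>
    simp [Zr, hcos, hsin, e01, e11, e02, e12, e20, e21, e22, ← ha, ← hc]

/-- **`T(Qx) = Q·T(x)·Z(θ)` for some `θ` independent of `h`.**
If `Q ∈ SO(3)` and `Z(α′)·Y(β′)·n = Q·Z(α)·Y(β)·n`, then there exists `θ ∈ ℝ` such that
`Z(α′)·Y(β′)·Z(2πh) = Q·Z(α)·Y(β)·Z(2πh)·Z(θ)` for all `h ∈ ℝ`. -/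
theorem euler_param_of_rotated_point
    (Q : Matrix (Fin 3) (Fin 3) ℝ) (hQ : Q ∈ Matrix.specialOrthogonalGroup (Fin 3) ℝ)
    (α β α' β' : ℝ)
    (h : (Zr α' * Yr β').mulVec npole = Q.mulVec ((Zr α * Yr β).mulVec npole)) :
    ∃ θ : ℝ, ∀ h' : ℝ,
      Zr α' * Yr β' * Zr (2 * Real.pi * h')
        = Q * (Zr α * Yr β * Zr (2 * Real.pi * h')) * Zr θ := by
  rw [Matrix.mem_specialOrthogonalGroup_iff, Matrix.mem_orthogonalGroup_iff'] at hQ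
  obtain ⟨hQo, hQd⟩ := hQ
  have hQo : Qᵀ * Q = 1 := hQo
  set A := Zr α' * Yr β' with hA
  set B := Q * (Zr α * Yr β) with hB
  have hAo : Aᵀ * A = 1 := by
    rw [hA, Matrix.transpose_mul]
    calc (Yr β')ᵀ * (Zr α')ᵀ * (Zr α' * Yr β')
        = (Yr β')ᵀ * ((Zr α')ᵀ * Zr α') * Yr β' := by
          simp only [Matrix.mul_assoc]
      _ = 1 := by rw [Zr_transpose_mul, Matrix.mul_one, Yr_transpose_mul]
  have hBo : Bᵀ * B = 1 := by
    rw [hB, Matrix.transpose_mul, Matrix.transpose_mul]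
    calc (Yr β)ᵀ * (Zr α)ᵀ * Qᵀ * (Q * (Zr α * Yr β))
        = (Yr β)ᵀ * ((Zr α)ᵀ * (Qᵀ * Q * Zr α)) * Yr β := by
          simp only [Matrix.mul_assoc]
      _ = 1 := by
          rw [hQo, Matrix.one_mul, Zr_transpose_mul, Matrix.mul_one, Yr_transpose_mul]
  set M := Bᵀ * A with hM
  have hMo : Mᵀ * M = 1 := by
    rw [hM, Matrix.transpose_mul, Matrix.transpose_transpose]
    have hBo' : B * Bᵀ = 1 := mul_eq_one_comm.mp hBo
    calc Aᵀ * B * (Bᵀ * A) = Aᵀ * (B * Bᵀ * A) := by simp only [Matrix.mul_assoc]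
      _ = 1 := by rw [hBo', Matrix.one_mul, hAo]
  have hdetA : A.det = 1 := by rw [hA, Matrix.det_mul, Zr_det, Yr_det]; norm_num
  have hdetB : B.det = 1 := by
    rw [hB, Matrix.det_mul, Matrix.det_mul, Zr_det, Yr_det, hQd]; norm_num
  have hMd : M.det = 1 := by
    rw [hM, Matrix.det_mul, Matrix.det_transpose, hdetB, hdetA]; norm_num
  have hBn : B.mulVec npole = A.mulVec npole := by
    rw [hB, ← Matrix.mulVec_mulVec, ← h]
  have hMn : M.mulVec npole = npole := by
    rw [hM, ← Matrix.mulVec_mulVec, ← hBn, Matrix.mulVec_mulVec, hBo,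
      Matrix.one_mulVec]
  obtain ⟨θ, hθ⟩ := fixes_npole M hMo hMd hMn
  refine ⟨θ, fun h' => ?_⟩
  have hBM : B * M = A := by
    rw [hM, ← Matrix.mul_assoc, mul_eq_one_comm.mp hBo, Matrix.one_mul]
  calc A * Zr (2 * Real.pi * h')
      = B * M * Zr (2 * Real.pi * h') := by rw [hBM]
    _ = B * (Zr θ * Zr (2 * Real.pi * h')) := by rw [hθ, Matrix.mul_assoc]
    _ = B * (Zr (2 * Real.pi * h') * Zr θ) := by rw [Zr_comm]
    _ = Q * (Zr α * Yr β * Zr (2 * Real.pi * h')) * Zr θ := by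
        simp only [hB, Matrix.mul_assoc]
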